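/- Let X^(n) = [M, C^(n)] S^(n)T for n = 1, ..., N, where M ∈ 𝔽^{I×R}, C^(n) ∈ 𝔽^{I×L_n}, S^(n) ∈ 𝔽^{K_n×(R+L_n)}. Suppose each S^(n) has full column rank and the block matrix Γ^(N) = [ [C^(1), −M, −C^(2), 0, ..., 0]; [C^(1), 0, 0, −M, −C^(3), ...]; ...; [C^(1), 0, ..., −M, −C^(N)] ] ∈ 𝔽^{(N−1)I × ((N−1)R + Σ L_n)} has full column rank. Then ⋂_{n=1}^N range(X^(n)) = range(M) and this intersection has dimension R. -/

import Mathlib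

open Matrix


lemma aux_surj {m n 𝔽 : Type*} [Fintype m] [Fintype n] [DecidableEq n] [Field 𝔽]
    (A : Matrix m n 𝔽) (h : Function.Injective A.mulVecLin) :
    Function.Surjective A.transpose.mulVecLin := by
  rw [← LinearMap.range_eq_top]
  apply Submodule.eq_top_of_finrank_eq
  have h2 : A.rank = Fintype.card n := by
    rw [Matrix.rank, LinearMap.finrank_range_of_inj h, Module.finrank_fintype_fun_eq_card]
  have h1 : Aᵀ.rank = Fintype.card n := by rw [A.rank_transpose, h2]
  rw [Module.finrank_fintype_fun_eq_card]
  exact h1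



/-- GCCA identifiability (Theorem 2). Views `X⁽ⁿ⁾ = [M, C⁽ⁿ⁾] S⁽ⁿ⁾ᵀ` for `n = 0, ..., N`
(so `N + 1 ≥ 2` views). If each `S⁽ⁿ⁾` has full column rank and the block matrix `Γ`
(with `N` block rows, the `j`-th being `[C⁽⁰⁾, 0, …, 0, −M, −C⁽ʲ⁺¹⁾, 0, …, 0]`, where the
pair `(−M, −C⁽ʲ⁺¹⁾)` occupies the block columns of view `j+1`) has full column rank, then
`⋂ₙ range(X⁽ⁿ⁾) = range(M)` and this intersection has dimension `R`. -/
theorem stmt_12 {𝔽 : Type*} [Field 𝔽] {N I R : ℕ} (hN : 1 ≤ N)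
    {L K : Fin (N + 1) → ℕ}
    (M : Matrix (Fin I) (Fin R) 𝔽)
    (C : (n : Fin (N + 1)) → Matrix (Fin I) (Fin (L n)) 𝔽)
    (S : (n : Fin (N + 1)) → Matrix (Fin (K n)) (Fin R ⊕ Fin (L n)) 𝔽)
    (X : (n : Fin (N + 1)) → Matrix (Fin I) (Fin (K n)) 𝔽)
    (hX : ∀ n, X n = Matrix.fromCols M (C n) * (S n).transpose)
    (hS : ∀ n, Function.Injective (S n).mulVecLin)
    (Γ : Matrix (Fin N × Fin I)
      (Fin (L 0) ⊕ ((j : Fin N) × (Fin R ⊕ Fin (L j.succ)))) 𝔽)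
    (hΓ1 : ∀ (j : Fin N) (i : Fin I) (l : Fin (L 0)),
      Γ (j, i) (Sum.inl l) = C 0 i l)
    (hΓ2 : ∀ (j : Fin N) (i : Fin I) (j' : Fin N) (r : Fin R),
      Γ (j, i) (Sum.inr ⟨j', Sum.inl r⟩) = if j' = j then -(M i r) else 0)
    (hΓ3 : ∀ (j : Fin N) (i : Fin I) (j' : Fin N) (l : Fin (L j'.succ)),
      Γ (j, i) (Sum.inr ⟨j', Sum.inr l⟩) = if j' = j then -(C j'.succ i l) else 0)
    (hΓ : Function.Injective Γ.mulVecLin) :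
    (⨅ n, LinearMap.range (X n).mulVecLin) = LinearMap.range M.mulVecLin ∧
    Module.finrank 𝔽
      ((⨅ n, LinearMap.range (X n).mulVecLin) : Submodule 𝔽 (Fin I → 𝔽)) = R := by
  classical
  -- expand Γ.mulVec
  have expand : ∀ (v : (Fin (L 0) ⊕ ((j : Fin N) × (Fin R ⊕ Fin (L j.succ)))) → 𝔽)
      (j : Fin N) (i : Fin I), Γ.mulVec v (j, i) =
      (∑ l, C 0 i l * v (Sum.inl l))
      + ((∑ r, -(M i r) * v (Sum.inr ⟨j, Sum.inl r⟩))
      + (∑ l, -(C j.succ i l) * v (Sum.inr ⟨j, Sum.inr l⟩))) := by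
    intro v j i
    simp only [Matrix.mulVec, dotProduct]
    rw [Fintype.sum_sum_type]
    congr 1
    · exact Finset.sum_congr rfl fun l _ => by rw [hΓ1]
    · rw [← Finset.univ_sigma_univ, Finset.sum_sigma]
      have h : ∀ j' : Fin N,
          (∑ s : Fin R ⊕ Fin (L j'.succ), Γ (j, i) (Sum.inr ⟨j', s⟩) * v (Sum.inr ⟨j', s⟩))
          = if j' = j then ((∑ r, -(M i r) * v (Sum.inr ⟨j', Sum.inl r⟩))
              + (∑ l, -(C j'.succ i l) * v (Sum.inr ⟨j', Sum.inr l⟩))) else 0 := by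
        intro j'
        rw [Fintype.sum_sum_type]
        simp only [hΓ2, hΓ3]
        by_cases h : j' = j <;> simp [h]
      rw [Finset.sum_congr rfl fun j' _ => h j', Finset.sum_ite_eq' Finset.univ j]
      simp
  -- ranges of X n
  have hrange : ∀ n, LinearMap.range (X n).mulVecLin
      = LinearMap.range (Matrix.fromCols M (C n)).mulVecLin := by
    intro n
    rw [hX n, Matrix.mulVecLin_mul, LinearMap.range_comp,
      LinearMap.range_eq_top.mpr (aux_surj (S n) (hS n)), Submodule.map_top]
  have hMle : ∀ n, LinearMap.range M.mulVecLin ≤ LinearMap.range (X n).mulVecLin := by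
    intro n
    rw [hrange n]
    rintro _ ⟨v, rfl⟩
    exact ⟨Sum.elim v 0, by simp⟩
  have key : (⨅ n, LinearMap.range (X n).mulVecLin) = LinearMap.range M.mulVecLin := by
    refine le_antisymm ?_ (le_iInf hMle)
    intro y hy
    simp only [Submodule.mem_iInf] at hy
    have hz : ∀ n, ∃ z : Fin R ⊕ Fin (L n) → 𝔽,
        M *ᵥ (z ∘ Sum.inl) + C n *ᵥ (z ∘ Sum.inr) = y := by
      intro n
      obtain ⟨z, hzz⟩ := (hrange n ▸ hy n)
      refine ⟨z, ?_⟩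
      have h2 : (Matrix.fromCols M (C n)) *ᵥ z = y := hzz
      rwa [← Sum.elim_comp_inl_inr z, Matrix.fromCols_mulVec_sumElim] at h2
    choose z hz using hz
    set w : (Fin (L 0) ⊕ ((j : Fin N) × (Fin R ⊕ Fin (L j.succ)))) → 𝔽 :=
      Sum.elim (fun l => z 0 (Sum.inr l))
        (fun p => Sum.elim (fun r => z p.1.succ (Sum.inl r) - z 0 (Sum.inl r))
          (fun l => z p.1.succ (Sum.inr l)) p.2) with hwdef
    have hw0 : Γ.mulVecLin w = 0 := by
      funext q
      obtain ⟨j, i⟩ := q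
      have h0 := congrFun (hz 0) i
      have hj := congrFun (hz j.succ) i
      simp only [Matrix.mulVec, dotProduct, Pi.add_apply, Function.comp] at h0 hj
      rw [Matrix.mulVecLin_apply, expand w j i]
      simp only [Matrix.mulVecLin_apply, Pi.zero_apply, expand w j i, hwdef,
        Sum.elim_inl, Sum.elim_inr, mul_sub, neg_mul, Finset.sum_sub_distrib,
        Finset.sum_neg_distrib]
      linear_combination h0 - hj
    have hwz : w = 0 := hΓ (by rw [hw0]; simp)
    have hb0 : ∀ l, z 0 (Sum.inr l) = 0 := fun l => congrFun hwz (Sum.inl l)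
    refine ⟨z 0 ∘ Sum.inl, ?_⟩
    have := hz 0
    rw [Matrix.mulVecLin_apply]
    have hc : C 0 *ᵥ (z 0 ∘ Sum.inr) = 0 := by
      have : (z 0 ∘ Sum.inr) = 0 := funext hb0
      rw [this, Matrix.mulVec_zero]
    rw [← hz 0, hc, add_zero]
  -- injectivity of M
  have hMinj : Function.Injective M.mulVecLin := by
    rw [← LinearMap.ker_eq_bot, LinearMap.ker_eq_bot']
    intro v hv
    set j0 : Fin N := ⟨0, hN⟩ with hj0
    set w : (Fin (L 0) ⊕ ((j : Fin N) × (Fin R ⊕ Fin (L j.succ)))) → 𝔽 :=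
      Sum.elim 0 (fun p => Sum.elim (fun r => if p.1 = j0 then v r else 0) 0 p.2) with hwdef
    have hw0 : Γ.mulVecLin w = 0 := by
      funext q
      obtain ⟨j, i⟩ := q
      have hv' := congrFun hv i
      simp only [Matrix.mulVecLin_apply, Matrix.mulVec, dotProduct, Pi.zero_apply] at hv'
      show Γ.mulVec w (j, i) = 0
      rw [expand w j i]
      simp only [hwdef, Sum.elim_inl, Sum.elim_inr, Pi.zero_apply, mul_zero,
        Finset.sum_const_zero, mul_ite, zero_add, add_zero]
      by_cases h : j = j0
      · subst h
        simp [neg_mul, Finset.sum_neg_distrib, hv']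
      · simp [h]
    have hwz : w = 0 := hΓ (by rw [hw0]; simp)
    funext r
    have := congrFun hwz (Sum.inr ⟨j0, Sum.inl r⟩)
    simpa [hwdef] using this
  refine ⟨key, ?_⟩
  rw [key, LinearMap.finrank_range_of_inj hMinj, Module.finrank_fintype_fun_eq_card,
    Fintype.card_fin]
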